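/- Let (Z_n)_{n≥0} be an increasing sequence of real-valued functions on [0,T] (for each ω) such that each Z_n is a supermartingale dominating a process U_n, where (U_n) increases pointwise to U and Z_n is the smallest supermartingale dominating U_n (in discrete time over a finite index set of times). Then Z = sup_n Z_n is the smallest supermartingale dominating U, provided Z is integrable at each time. -/

import Mathlib

open MeasureTheory Filter

/-- The discrete-time Snell envelope over `{0,…,T}`, defined by backward
recursion `Z_T = U_T`, `Z_t = max (U_t) (E[Z_{t+1} | ℱ_t])`, via an auxiliary
recursion on the number of remaining steps. -/
noncomputable def snellAux {Ω : Type*} {m0 : MeasurableSpace Ω} (μ : Measure Ω)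
    (ℱ : MeasureTheory.Filtration ℕ m0) (U : ℕ → Ω → ℝ) (T : ℕ) : ℕ → Ω → ℝ
  | 0 => U T
  | (k + 1) => fun ω =>
      max (U (T - (k + 1)) ω) ((μ[snellAux μ ℱ U T k | ℱ (T - (k + 1))]) ω)

noncomputable def snell {Ω : Type*} {m0 : MeasurableSpace Ω} (μ : Measure Ω)
    (ℱ : MeasureTheory.Filtration ℕ m0) (U : ℕ → Ω → ℝ) (T : ℕ) (t : ℕ) : Ω → ℝ :=
  snellAux μ ℱ U T (T - t)

/-- Conditional monotone convergence: if integrable `f n ↑ g` a.e. with `g`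
integrable, then `μ[f n | m] → μ[g | m]` a.e. -/
lemma condexp_tendsto_of_monotone {Ω : Type*} {m m0 : MeasurableSpace Ω}
    (μ : Measure Ω) [IsProbabilityMeasure μ] {f : ℕ → Ω → ℝ} {g : Ω → ℝ}
    (hf : ∀ n, Integrable (f n) μ) (hg : Integrable g μ)
    (hmono : ∀ᵐ ω ∂μ, ∀ n, f n ω ≤ f (n + 1) ω)
    (hconv : ∀ᵐ ω ∂μ, Tendsto (fun n => f n ω) atTop (nhds (g ω))) :
    ∀ᵐ ω ∂μ, Tendsto (fun n => (μ[f n | m]) ω) atTop (nhds ((μ[g | m]) ω)) := by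
  by_cases hm : m ≤ m0
  swap
  · simp only [condExp_of_not_le hm]
    exact ae_of_all _ fun ω => tendsto_const_nhds
  set h : ℕ → Ω → ℝ := fun n => μ[f n | m] with hh
  set G : Ω → ℝ := μ[g | m] with hG
  have hfg : ∀ n, f n ≤ᵐ[μ] g := by
    intro n
    filter_upwards [hmono, hconv] with ω hm' hc
    exact (monotone_nat_of_le_succ hm').ge_of_tendsto hc n
  have hmono' : ∀ n, h n ≤ᵐ[μ] h (n + 1) := fun n =>
    condExp_mono (hf n) (hf (n + 1)) (hmono.mono fun ω hω => hω n)
  have hhG : ∀ n, h n ≤ᵐ[μ] G := fun n => condExp_mono (hf n) hg (hfg n)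
  have hmonoAll : ∀ᵐ ω ∂μ, ∀ n, h n ω ≤ h (n + 1) ω := ae_all_iff.2 hmono'
  have hGAll : ∀ᵐ ω ∂μ, ∀ n, h n ω ≤ G ω := ae_all_iff.2 hhG
  set L : Ω → ℝ := fun ω => ⨆ n, h n ω with hL
  have hLtend : ∀ᵐ ω ∂μ, Tendsto (fun n => h n ω) atTop (nhds (L ω)) := by
    filter_upwards [hmonoAll, hGAll] with ω h1 h2
    exact tendsto_atTop_ciSup (monotone_nat_of_le_succ h1)
      ⟨G ω, Set.forall_mem_range.2 h2⟩
  have hLG : L ≤ᵐ[μ] G := by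
    filter_upwards [hGAll] with ω h2
    exact ciSup_le h2
  have hLmeas : AEStronglyMeasurable L μ :=
    aestronglyMeasurable_of_tendsto_ae atTop
      (fun n => (integrable_condExp (f := f n)).aestronglyMeasurable) hLtend
  have hLint : Integrable L μ := by
    refine Integrable.mono'
      ((integrable_condExp (f := f 0) (m := m)).abs.add
        (integrable_condExp (f := g) (m := m)).abs) hLmeas ?_
    filter_upwards [hGAll, hLG] with ω h2 h3
    have h0 : h 0 ω ≤ L ω := le_ciSup ⟨G ω, Set.forall_mem_range.2 h2⟩ 0
    rw [Real.norm_eq_abs, abs_le]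
    simp only [Pi.add_apply]
    constructor
    · have := neg_abs_le (h 0 ω); have := abs_nonneg (G ω); linarith
    · have := le_abs_self (G ω); have := abs_nonneg (h 0 ω); linarith
  have hmonoAll' : ∀ᵐ ω ∂μ, Monotone fun n => h n ω :=
    hmonoAll.mono fun ω h1 => monotone_nat_of_le_succ h1
  have hmono2 : ∀ᵐ ω ∂μ, Monotone fun n => f n ω :=
    hmono.mono fun ω h1 => monotone_nat_of_le_succ h1
  have h1 : Tendsto (fun n => ∫ ω, h n ω ∂μ) atTop (nhds (∫ ω, L ω ∂μ)) :=
    integral_tendsto_of_tendsto_of_monotone (fun n => integrable_condExp) hLint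
      hmonoAll' hLtend
  have h2 : Tendsto (fun n => ∫ ω, f n ω ∂μ) atTop (nhds (∫ ω, g ω ∂μ)) :=
    integral_tendsto_of_tendsto_of_monotone hf hg hmono2 hconv
  have heq : (fun n => ∫ ω, h n ω ∂μ) = fun n => ∫ ω, f n ω ∂μ :=
    funext fun n => integral_condExp hm
  have hLg : ∫ ω, L ω ∂μ = ∫ ω, g ω ∂μ := tendsto_nhds_unique (heq ▸ h1) h2
  have hGg : ∫ ω, G ω ∂μ = ∫ ω, g ω ∂μ := integral_condExp hm
  have hzero : ∫ ω, (G ω - L ω) ∂μ = 0 := by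
    rw [integral_sub integrable_condExp hLint, hGg, hLg, sub_self]
  have hnn : 0 ≤ᵐ[μ] fun ω => G ω - L ω :=
    hLG.mono fun ω h => sub_nonneg.2 h
  have hsub : (fun ω => G ω - L ω) =ᵐ[μ] 0 :=
    (integral_eq_zero_iff_of_nonneg_ae hnn (integrable_condExp.sub hLint)).1 hzero
  filter_upwards [hLtend, hsub] with ω hω1 hω2
  have : G ω = L ω := by
    have : G ω - L ω = 0 := hω2
    linarith
  rw [this]
  exact hω1

lemma snellAux_key {Ω : Type*} {m0 : MeasurableSpace Ω} (μ : Measure Ω)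
    [IsProbabilityMeasure μ] (ℱ : MeasureTheory.Filtration ℕ m0) (T : ℕ)
    (U : ℕ → ℕ → Ω → ℝ) (Ulim : ℕ → Ω → ℝ)
    (hint : ∀ n t, Integrable (U n t) μ) (hintl : ∀ t, Integrable (Ulim t) μ)
    (hmono : ∀ n t ω, U n t ω ≤ U (n + 1) t ω)
    (hconv : ∀ t ω, Tendsto (fun n => U n t ω) atTop (nhds (Ulim t ω))) :
    ∀ k, (∀ n, Integrable (snellAux μ ℱ (U n) T k) μ) ∧
      Integrable (snellAux μ ℱ Ulim T k) μ ∧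
      (∀ᵐ ω ∂μ, ∀ n, snellAux μ ℱ (U n) T k ω ≤ snellAux μ ℱ (U (n + 1)) T k ω) ∧
      (∀ᵐ ω ∂μ, Tendsto (fun n => snellAux μ ℱ (U n) T k ω) atTop
        (nhds (snellAux μ ℱ Ulim T k ω))) := by
  intro k
  induction k with
  | zero =>
    refine ⟨fun n => hint n T, hintl T, ae_of_all _ fun ω n => hmono n T ω,
      ae_of_all _ fun ω => hconv T ω⟩
  | succ k ih =>
    obtain ⟨ihInt, ihIntl, ihMono, ihConv⟩ := ih
    have hcmct := condexp_tendsto_of_monotone (m := ℱ (T - (k + 1))) μ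
      ihInt ihIntl ihMono ihConv
    have hcmono : ∀ n, (μ[snellAux μ ℱ (U n) T k | ℱ (T - (k + 1))]) ≤ᵐ[μ]
        (μ[snellAux μ ℱ (U (n + 1)) T k | ℱ (T - (k + 1))]) := fun n =>
      condExp_mono (ihInt n) (ihInt (n + 1)) (ihMono.mono fun ω hω => hω n)
    refine ⟨?_, ?_, ?_, ?_⟩
    · intro n
      exact (hint n (T - (k + 1))).sup integrable_condExp
    · exact (hintl (T - (k + 1))).sup integrable_condExp
    · have := ae_all_iff.2 hcmono
      filter_upwards [this] with ω hω n
      simp only [snellAux]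
      exact max_le_max (hmono n (T - (k + 1)) ω) (hω n)
    · filter_upwards [hcmct] with ω hω
      simp only [snellAux]
      exact ((hconv (T - (k + 1)) ω).max hω)

/-- Monotone convergence of Snell envelopes: if `U n ↑ U` pointwise (adapted,
integrable processes over the finite horizon `{0,…,T}`) and the pointwise
supremum of the Snell envelopes of the `U n` is integrable at each time, then
`sup_n Z^{U_n}` coincides (a.e., at each time `t ≤ T`) with the Snell envelope
of `U`, i.e. with the smallest supermartingale dominating `U`. -/
theorem stmt7 {Ω : Type*} {m0 : MeasurableSpace Ω} (μ : Measure Ω) [IsProbabilityMeasure μ]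
    (ℱ : MeasureTheory.Filtration ℕ m0) (T : ℕ)
    (U : ℕ → ℕ → Ω → ℝ) (Ulim : ℕ → Ω → ℝ)
    (hadp : ∀ n, Adapted ℱ (U n)) (hadpl : Adapted ℱ Ulim)
    (hint : ∀ n t, Integrable (U n t) μ) (hintl : ∀ t, Integrable (Ulim t) μ)
    (hmono : ∀ n t ω, U n t ω ≤ U (n + 1) t ω)
    (hconv : ∀ t ω, Tendsto (fun n => U n t ω) atTop (nhds (Ulim t ω)))
    (hZint : ∀ t, Integrable (fun ω => ⨆ n, snell μ ℱ (U n) T t ω) μ) :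
    ∀ t, t ≤ T →
      (fun ω => ⨆ n, snell μ ℱ (U n) T t ω) =ᵐ[μ] snell μ ℱ Ulim T t := by
  intro t _
  obtain ⟨_, _, hMono, hConv⟩ :=
    snellAux_key μ ℱ T U Ulim hint hintl hmono hconv (T - t)
  simp only [snell]
  filter_upwards [hMono, hConv] with ω h1 h2
  exact (isLUB_of_tendsto_atTop (monotone_nat_of_le_succ h1) h2).ciSup_eq
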